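/- Let T > 0 and let u : [0,T] × ℝ → ℝ have continuous partial derivatives u_x, u_{xx}, u_{xxx}, with m = u − u_{xx}. Let q : [0,T] × ℝ → ℝ be twice continuously differentiable with q(0,x) = x and ∂_t q(t,x) = sin(u(t,q(t,x))² − u_x(t,q(t,x))²) for all (t,x). Then for all (t,x) ∈ [0,T] × ℝ: ∂ₓ q(t,x) = exp(2·∫₀ᵗ [cos(u² − u_x²)·m·u_x](s, q(s,x)) ds) > 0. -/

import Mathlib

open MeasureTheory Real Set

/-- The convolution `(p*f)(x) = ∫_ℝ (1/2) e^{-|x-y|} f(y) dy` with `p(x) = (1/2)exp(-|x|)`. -/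
noncomputable def pConv (f : ℝ → ℝ) (x : ℝ) : ℝ := ∫ y : ℝ, (1/2) * Real.exp (-|x - y|) * f y

/-- `(p₊*f)(x) = (1/2)∫_{-∞}^{x} e^{y-x} f(y) dy`. -/
noncomputable def pPlus (f : ℝ → ℝ) (x : ℝ) : ℝ := (1/2) * ∫ y in Set.Iic x, Real.exp (y - x) * f y

/-- `(p₋*f)(x) = (1/2)∫_{x}^{∞} e^{x-y} f(y) dy`. -/
noncomputable def pMinus (f : ℝ → ℝ) (x : ℝ) : ℝ := (1/2) * ∫ y in Set.Ici x, Real.exp (x - y) * f y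

/-- Spatial partial derivative `∂ₓ` of a function of `(t, x)`. -/
noncomputable def pdx (f : ℝ → ℝ → ℝ) : ℝ → ℝ → ℝ := fun t x => deriv (fun y => f t y) x

/-- Time partial derivative `∂ₜ` of a function of `(t, x)`. -/
noncomputable def pdt (f : ℝ → ℝ → ℝ) : ℝ → ℝ → ℝ := fun t x => deriv (fun s => f s x) t

/-- The momentum density `m = u - u_{xx}`. -/
noncomputable def mF (u : ℝ → ℝ → ℝ) : ℝ → ℝ → ℝ := fun t x => u t x - pdx (pdx u) t x

/-- The blow-up quantity `M = cos(u² - u_x²) · m · u_x`. -/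
noncomputable def MF (u : ℝ → ℝ → ℝ) : ℝ → ℝ → ℝ :=
  fun t x => Real.cos ((u t x) ^ 2 - (pdx u t x) ^ 2) * mF u t x * pdx u t x

theorem stmt12 (T : ℝ) (hT : 0 < T) (u : ℝ → ℝ → ℝ)
    -- existence of the partial derivatives u_x, u_xx, u_xxx
    (hux : ∀ t : ℝ, Differentiable ℝ (fun y => u t y))
    (huxx : ∀ t : ℝ, Differentiable ℝ (fun y => pdx u t y))
    (huxxx : ∀ t : ℝ, Differentiable ℝ (fun y => pdx (pdx u) t y))
    -- continuity of u and of these partial derivatives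
    (hc : Continuous (Function.uncurry u))
    (hcx : Continuous (Function.uncurry (pdx u)))
    (hcxx : Continuous (Function.uncurry (pdx (pdx u))))
    (hcxxx : Continuous (Function.uncurry (pdx (pdx (pdx u)))))
    -- the characteristics: q twice continuously differentiable, q(0,x) = x,
    -- ∂ₜq(t,x) = sin(u(t,q)² - u_x(t,q)²)
    (q : ℝ → ℝ → ℝ) (hq : ContDiff ℝ 2 (Function.uncurry q))
    (hq0 : ∀ x : ℝ, q 0 x = x)
    (hqt : ∀ t ∈ Set.Icc (0 : ℝ) T, ∀ x : ℝ,
      HasDerivAt (fun s => q s x)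
        (Real.sin ((u t (q t x)) ^ 2 - (pdx u t (q t x)) ^ 2)) t) :
    ∀ t ∈ Set.Icc (0 : ℝ) T, ∀ x : ℝ,
      pdx q t x = Real.exp (2 * ∫ s in (0 : ℝ)..t,
          Real.cos ((u s (q s x)) ^ 2 - (pdx u s (q s x)) ^ 2)
            * mF u s (q s x) * pdx u s (q s x)) ∧
      0 < pdx q t x := by
  intro t ht x
  classical
  set F := Function.uncurry q with hFdef
  have hFd : Differentiable ℝ F := hq.differentiable (by norm_num)
  have hf' : ∀ p, HasFDerivAt F (fderiv ℝ F p) p := fun p => (hFd p).hasFDerivAt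
  have hf'C1 : ContDiff ℝ 1 (fderiv ℝ F) := hq.fderiv_right (by norm_num)
  have hf'd : Differentiable ℝ (fderiv ℝ F) := hf'C1.differentiable one_ne_zero
  -- L1 : spatial derivative of q
  have L1 : ∀ s y : ℝ, HasDerivAt (fun z => q s z) ((fderiv ℝ F (s, y)) (0, 1)) y := by
    intro s y
    have h := ((hf' (s, y)).comp y (hasFDerivAt_prodMk_right s y)).hasDerivAt
    simp only [Function.comp_def] at h
    exact h
  -- L2 : time derivative of q
  have L2 : ∀ s y : ℝ, HasDerivAt (fun r => q r y) ((fderiv ℝ F (s, y)) (1, 0)) s := by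
    intro s y
    have h := ((hf' (s, y)).comp s (hasFDerivAt_prodMk_left s y)).hasDerivAt
    simp only [Function.comp_def] at h
    exact h
  -- w is the spatial derivative of q along the fixed x
  set w : ℝ → ℝ := fun s => (fderiv ℝ F (s, x)) (0, 1) with hwdef
  have hpdxq : ∀ s : ℝ, pdx q s x = w s := fun s => (L1 s x).deriv
  -- derivative of w in time, via second derivative
  have hw : ∀ s : ℝ, HasDerivAt w ((fderiv ℝ (fderiv ℝ F) (s, x)) (1, 0) (0, 1)) s := by
    intro s
    have h1 : HasDerivAt (fun r => fderiv ℝ F (r, x)) ((fderiv ℝ (fderiv ℝ F) (s, x)) (1, 0)) s := by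
      have h := (((hf'd (s, x)).hasFDerivAt).comp s (hasFDerivAt_prodMk_left s x)).hasDerivAt
      simpa [Function.comp_def] using h
    have h2 := h1.clm_apply (hasDerivAt_const s ((0 : ℝ), (1 : ℝ)))
    simpa using h2
  have hsym : ∀ s : ℝ, (fderiv ℝ (fderiv ℝ F) (s, x)) (1, 0) (0, 1)
      = (fderiv ℝ (fderiv ℝ F) (s, x)) (0, 1) (1, 0) := fun s =>
    second_derivative_symmetric hf' ((hf'd (s, x)).hasFDerivAt) _ _
  -- the ODE coefficient
  set Mq : ℝ → ℝ := fun s => Real.cos ((u s (q s x)) ^ 2 - (pdx u s (q s x)) ^ 2)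
      * mF u s (q s x) * pdx u s (q s x) with hMqdef
  -- continuity of Mq
  have hqc : Continuous fun s : ℝ => q s x :=
    hq.continuous.comp (continuous_id.prodMk continuous_const)
  have hpair : Continuous fun s : ℝ => (s, q s x) := continuous_id.prodMk hqc
  have hcu : Continuous fun s : ℝ => u s (q s x) := hc.comp hpair
  have hcux : Continuous fun s : ℝ => pdx u s (q s x) := hcx.comp hpair
  have hcuxx : Continuous fun s : ℝ => pdx (pdx u) s (q s x) := hcxx.comp hpair
  have hMqc : Continuous Mq := by
    have : Continuous fun s : ℝ => mF u s (q s x) := hcu.sub hcuxx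
    exact ((Real.continuous_cos.comp ((hcu.pow 2).sub (hcux.pow 2))).mul this).mul hcux
  -- the ODE for w on [0, T]
  have hwode : ∀ s ∈ Set.Icc (0 : ℝ) T, HasDerivAt w (2 * Mq s * w s) s := by
    intro s hs
    -- the function y ↦ ∂ₜ q (s, y) equals y ↦ sin(...) everywhere
    have heq : (fun y => (fderiv ℝ F (s, y)) (1, 0))
        = fun y => Real.sin ((u s (q s y)) ^ 2 - (pdx u s (q s y)) ^ 2) := by
      funext y
      exact (L2 s y).unique (hqt s hs y)
    -- derivative in x of the left side
    have hg : HasDerivAt (fun y => (fderiv ℝ F (s, y)) (1, 0))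
        ((fderiv ℝ (fderiv ℝ F) (s, x)) (0, 1) (1, 0)) x := by
      have h1 : HasDerivAt (fun y => fderiv ℝ F (s, y)) ((fderiv ℝ (fderiv ℝ F) (s, x)) (0, 1)) x := by
        have h := (((hf'd (s, x)).hasFDerivAt).comp x (hasFDerivAt_prodMk_right s x)).hasDerivAt
        simpa [Function.comp_def] using h
      have h2 := h1.clm_apply (hasDerivAt_const x ((1 : ℝ), (0 : ℝ)))
      simpa using h2
    -- derivative in x of the right side, via chain rule
    have hqx : HasDerivAt (fun y => q s y) (w s) x := L1 s x
    have hu1 : HasDerivAt (fun z => u s z) (pdx u s (q s x)) (q s x) :=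
      (hux s (q s x)).hasDerivAt
    have hu2 : HasDerivAt (fun z => pdx u s z) (pdx (pdx u) s (q s x)) (q s x) :=
      (huxx s (q s x)).hasDerivAt
    have hφ : HasDerivAt (fun y => (u s (q s y)) ^ 2 - (pdx u s (q s y)) ^ 2)
        (2 * u s (q s x) * (pdx u s (q s x) * w s)
          - 2 * pdx u s (q s x) * (pdx (pdx u) s (q s x) * w s)) x := by
      have h1 := ((hu1.comp x hqx).pow 2)
      have h2 := ((hu2.comp x hqx).pow 2)
      have := h1.sub h2
      simpa [Function.comp_def, Pi.pow_def, Pi.sub_def, pow_one, mul_comm, mul_assoc, mul_left_comm] using this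
    have hsin := hφ.sin
    rw [heq] at hg
    have hder := hg.unique hsin
    have hfinal := hw s
    rw [hsym s, hder] at hfinal
    convert hfinal using 1
    simp only [hMqdef, mF]
    ring
  -- initial condition : w 0 = 1
  have hw0 : w 0 = 1 := by
    have h1 : HasDerivAt (fun z => q 0 z) (w 0) x := L1 0 x
    have h2 : HasDerivAt (fun z => q 0 z) 1 x := by
      have : (fun z : ℝ => q 0 z) = fun z => z := funext hq0
      rw [this]; exact hasDerivAt_id x
    exact h1.unique h2
  -- the integral
  set I : ℝ → ℝ := fun r => ∫ s in (0 : ℝ)..r, Mq s with hIdef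
  have hI : ∀ s : ℝ, HasDerivAt I (Mq s) s := fun s =>
    intervalIntegral.integral_hasDerivAt_right (hMqc.intervalIntegrable 0 s)
      (hMqc.stronglyMeasurableAtFilter _ _) hMqc.continuousAt
  -- auxiliary function h = w * exp(-(2*I))
  set h : ℝ → ℝ := fun s => w s * Real.exp (-(2 * I s)) with hhdef
  have hhc : Continuous h := by
    have hwc : Continuous w := by
      have : Differentiable ℝ w := fun s => (hw s).differentiableAt
      exact this.continuous
    have hIc : Continuous I := by
      have : Differentiable ℝ I := fun s => (hI s).differentiableAt
      exact this.continuous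
    exact hwc.mul (Real.continuous_exp.comp (((continuous_const.mul hIc)).neg))
  have hhder : ∀ s ∈ Set.Icc (0 : ℝ) T, HasDerivAt h 0 s := by
    intro s hs
    have he : HasDerivAt (fun r => Real.exp (-(2 * I r)))
        (Real.exp (-(2 * I s)) * (-(2 * Mq s))) s := (((hI s).const_mul 2).neg).exp
    have := (hwode s hs).mul he
    have h0 : 2 * Mq s * w s * Real.exp (-(2 * I s)) + w s * (Real.exp (-(2 * I s)) * -(2 * Mq s)) = 0 := by ring
    rw [h0] at this
    exact this
  have hconst : ∀ s ∈ Set.Icc (0 : ℝ) T, h s = 1 := by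
    have := eq_of_has_deriv_right_eq (f := h) (g := fun _ => (1 : ℝ)) (f' := fun _ => (0 : ℝ))
      (a := 0) (b := T)
      (fun s hs => (hhder s (Set.mem_Icc.mpr ⟨hs.1, le_of_lt hs.2⟩)).hasDerivWithinAt)
      (fun s _ => (hasDerivAt_const s (1 : ℝ)).hasDerivWithinAt)
      hhc.continuousOn continuous_const.continuousOn ?_
    · exact this
    · simp [hhdef, hw0, hIdef, intervalIntegral.integral_same]
  have hht := hconst t ht
  have hwt : w t = Real.exp (2 * I t) := by
    have hne : Real.exp (-(2 * I t)) ≠ 0 := Real.exp_ne_zero _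
    have : w t * Real.exp (-(2 * I t)) = 1 := hht
    rw [Real.exp_neg] at this
    field_simp at this
    linarith [this]
  refine ⟨by rw [hpdxq t]; exact hwt, ?_⟩
  rw [hpdxq t, hwt]
  exact Real.exp_pos _
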